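/- Let P be a reflexive polytope in M_ℝ and let Π(P) = {P_1, …, P_r} be a nef-partition. Then Π(P) splits as a direct sum over ℤ, Π(P) = Π(P_{I_1}) ⊕ ⋯ ⊕ Π(P_{I_k}), if and only if the associated Cayley polytope P_1 * ⋯ * P_r is a ℤ-join of its faces corresponding to the Cayley polytopes of the sub-nef-partitions {P_i : i ∈ I_1}, …, {P_i : i ∈ I_k}. -/

import Mathlib

open Pointwise
open scoped Classical

noncomputable section

namespace GorST

/-- Points of `d`-dimensional real space. -/
abbrev Pt (n : ℕ) := Fin n → ℝ

/-- A point of the standard lattice `ℤ^n ⊂ ℝ^n`. -/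
def isLatticePt {n : ℕ} (x : Pt n) : Prop := ∀ i, ∃ k : ℤ, x i = (k : ℝ)

/-- The standard lattice `ℤ^n` inside `ℝ^n`. -/
def stdL (n : ℕ) : Set (Pt n) := {x | isLatticePt x}

/-- The standard pairing (dot product). -/
def dot {n : ℕ} (x y : Pt n) : ℝ := ∑ i, x i * y i

/-- `S` is a lattice polytope with respect to the lattice `L`:
it is the convex hull of finitely many points of `L`.  (The empty set is allowed.) -/
def IsLat {n : ℕ} (L S : Set (Pt n)) : Prop :=
  ∃ V : Finset (Pt n), ↑V ⊆ L ∧ S = convexHull ℝ (V : Set (Pt n))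

/-- `F` is a face of `S` (exposed face; this includes the improper faces `∅` and `S`). -/
def IsFaceOf {n : ℕ} (F S : Set (Pt n)) : Prop := IsExposed ℝ S F

/-- Dimension of a polytope, with `dim ∅ = -1`. -/
def dimP {n : ℕ} (S : Set (Pt n)) : ℤ :=
  if S = ∅ then -1 else (Module.finrank ℝ (affineSpan ℝ S).direction : ℤ)

/-- Dimension as a natural number (for nonempty polytopes). -/
def dimNat {n : ℕ} (S : Set (Pt n)) : ℕ := Module.finrank ℝ (affineSpan ℝ S).direction

/-- Number of points of `L` in the `k`-th dilate of `S` (Ehrhart counting function). -/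
def ehr {n : ℕ} (L S : Set (Pt n)) (k : ℕ) : ℕ := (L ∩ (k : ℝ) • S).ncard

/-- The `h^*`-polynomial of a lattice polytope `S` with respect to the lattice `L`,
i.e. the numerator of the Ehrhart series `1 + ∑_{m ≥ 1} |L ∩ mS| t^m = h^*(t)/(1-t)^{dim S + 1}`;
its coefficients are given by `h^*_i = ∑_j (-1)^j (dim S + 1 choose j) ehr(i - j)`.
By convention `h^*_∅ = 1`. -/
def hStarL {n : ℕ} (L S : Set (Pt n)) : Polynomial ℤ :=
  if S = ∅ then 1
  else
    ∑ i ∈ Finset.range (dimNat S + 1),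
      Polynomial.C
          (∑ j ∈ Finset.range (i + 1),
            (-1 : ℤ) ^ j * ((dimNat S + 1).choose j : ℤ) * (ehr L S (i - j) : ℤ)) *
        Polynomial.X ^ i

/-- The degree of a lattice polytope: the degree of its `h^*`-polynomial. -/
def degL {n : ℕ} (L S : Set (Pt n)) : ℕ := (hStarL L S).natDegree

/-- The codegree of a lattice polytope: `dim S + 1 - deg S` (and `0` for `∅`). -/
def codegL {n : ℕ} (L S : Set (Pt n)) : ℤ :=
  if S = ∅ then 0 else dimP S + 1 - degL L S

/-- Truncation of a polynomial to its terms of degree `< k`. -/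
def truncLT (k : ℕ) (p : Polynomial ℤ) : Polynomial ℤ :=
  ∑ i ∈ Finset.range k, Polynomial.C (p.coeff i) * Polynomial.X ^ i

/-- The `g`-polynomial of the interval `[F, G]` in the (Eulerian) face poset of the
polytope `G`, computed with the recursion of Stanley:
`g = h = 1` in rank `0`, `h([F,G],t) = ∑_{F < H ≤ G} (t-1)^{ρ(H)-1} g([H,G],t)` and
`g([F,G],t) = τ_{< e/2}((1-t) h([F,G],t))` in rank `e > 0`.
The first argument is a fuel parameter (any value `≥` the rank of the interval
gives the correct answer). -/
def gAux {n : ℕ} : ℕ → Set (Pt n) → Set (Pt n) → Polynomial ℤ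
  | 0, _, _ => 1
  | fuel + 1, F, G =>
    if F = G then 1
    else
      truncLT (((dimP G - dimP F).toNat + 1) / 2)
        ((1 - Polynomial.X) *
          ∑ᶠ H ∈ {H : Set (Pt n) | IsFaceOf H G ∧ F ⊆ H ∧ F ≠ H},
            (Polynomial.X - 1) ^ ((dimP H - dimP F - 1).toNat) * gAux fuel H G)

/-- The `g`-polynomial `g([F,G], t)` of the interval of faces between `F` and `G`. -/
def gPoly {n : ℕ} (F G : Set (Pt n)) : Polynomial ℤ := gAux (dimNat G + 2) F G

/-- The polynomial `S̃(S, t) = ∑_{∅ ≤ F ≤ S} (-1)^{dim S - dim F} h^*_F(t) g([F,S],t)`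
of Borisov and Mavlyutov, with respect to the lattice `L`. -/
def StildeL {n : ℕ} (L S : Set (Pt n)) : Polynomial ℤ :=
  ∑ᶠ F ∈ {F : Set (Pt n) | IsFaceOf F S},
    (-1 : Polynomial ℤ) ^ ((dimP S - dimP F).toNat) * (hStarL L F * gPoly F S)

/-- The lattice dual to `L ∩ W` inside the subspace `W` (under the dot product pairing). -/
def dualLatIn {n : ℕ} (L : Set (Pt n)) (W : Submodule ℝ (Pt n)) : Set (Pt n) :=
  {y | y ∈ W ∧ ∀ x ∈ L ∩ (W : Set (Pt n)), ∃ k : ℤ, dot y x = (k : ℝ)}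

/-- `S` is a reflexive polytope with respect to the lattice `L` (inside its linear span):
`S` is a lattice polytope w.r.t. `L ∩ span S`, `0` lies in its (relative) interior, and the
dual polytope `{y ∈ span S | ⟨y,x⟩ ≥ -1 for all x ∈ S}` is a lattice polytope w.r.t. the
dual lattice. -/
def IsReflexiveL {n : ℕ} (L S : Set (Pt n)) : Prop :=
  IsLat (L ∩ (Submodule.span ℝ S : Set (Pt n))) S ∧
  (0 : Pt n) ∈ intrinsicInterior ℝ S ∧
  IsLat (dualLatIn L (Submodule.span ℝ S))
    {y | y ∈ Submodule.span ℝ S ∧ ∀ x ∈ S, -1 ≤ dot y x}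

/-- `m₀` witnesses that `S` is Gorenstein of index `r` w.r.t. `L`: `m₀` is a lattice point
in the (relative) interior of `r S` and `r S - m₀` is reflexive. -/
def GorWitness {n : ℕ} (L S : Set (Pt n)) (r : ℕ) (m₀ : Pt n) : Prop :=
  m₀ ∈ L ∧ m₀ ∈ intrinsicInterior ℝ ((r : ℝ) • S) ∧
  IsReflexiveL L ((fun x => x - m₀) '' ((r : ℝ) • S))

/-- `S` is a Gorenstein polytope of index `r` with respect to the lattice `L`:
`r S` contains a unique interior lattice point `m₀`, and `r S - m₀` is reflexive. -/
def IsGorensteinL {n : ℕ} (L S : Set (Pt n)) (r : ℕ) : Prop :=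
  IsLat L S ∧ 0 < r ∧ (∃ m₀, GorWitness L S r m₀) ∧
  ∀ m₁ m₂,
    (m₁ ∈ L ∧ m₁ ∈ intrinsicInterior ℝ ((r : ℝ) • S)) →
    (m₂ ∈ L ∧ m₂ ∈ intrinsicInterior ℝ ((r : ℝ) • S)) → m₁ = m₂

/-- `S` is a Gorenstein polytope (of some index) w.r.t. `L`; by convention `∅` is Gorenstein. -/
def IsGorensteinPoly {n : ℕ} (L S : Set (Pt n)) : Prop :=
  S = ∅ ∨ ∃ r, IsGorensteinL L S r

/-- Embedding at height 1: `x ↦ (x, 1)`. -/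
def emb1 {n : ℕ} : Pt n → Pt (n + 1) := fun x => Fin.snoc x 1

/-- Embedding at height 0: `x ↦ (x, 0)`. -/
def emb0 {n : ℕ} : Pt n → Pt (n + 1) := fun x => Fin.snoc x 0

/-- The linear span of `S × {1}`: the span of the cone `C_S` over `S`. -/
def Wspan {n : ℕ} (S : Set (Pt n)) : Submodule ℝ (Pt (n + 1)) :=
  Submodule.span ℝ (emb1 '' S)

/-- The dual Gorenstein polytope `S^×` of a Gorenstein polytope `S` of index `r` with
unique interior lattice point `m₀` of `r S`: the support polytope
`{y ∈ C_S^∨ | ⟨y, (m₀, r)⟩ = 1}` of the dual of the cone `C_S` over `S × {1}`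
(taken inside the linear span of `S × {1}`, using the dot product as the pairing). -/
def gorDual {n : ℕ} (S : Set (Pt n)) (r : ℕ) (m₀ : Pt n) : Set (Pt (n + 1)) :=
  {y | y ∈ Wspan S ∧ (∀ x ∈ S, 0 ≤ dot y (emb1 x)) ∧ dot y (Fin.snoc m₀ (r : ℝ)) = 1}

/-- The face `F^*` of the dual Gorenstein polytope `S^×` corresponding to the face `F` of
`S`:  `F^* = {y ∈ S^× | ⟨y, (x,1)⟩ = 0 for all x ∈ F}`. -/
def faceDual {n : ℕ} (S : Set (Pt n)) (r : ℕ) (m₀ : Pt n) (F : Set (Pt n)) :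
    Set (Pt (n + 1)) :=
  {y | y ∈ gorDual S r m₀ ∧ ∀ x ∈ F, dot y (emb1 x) = 0}

/-- The lattice dual (under the dot product) to the lattice `ℤ^{n+1} ∩ span(S × {1})`;
this is the lattice with respect to which `S^×` is a lattice polytope. -/
def dualLatOf {n : ℕ} (S : Set (Pt n)) : Set (Pt (n + 1)) :=
  {y | y ∈ Wspan S ∧ ∀ x, isLatticePt x → x ∈ Wspan S → ∃ k : ℤ, dot y x = (k : ℝ)}

/-- The field `ℚ(u,v)` of rational functions in two variables. -/
abbrev KK : Type := FractionRing (MvPolynomial (Fin 2) ℚ)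

/-- The rational function `u`. -/
def uu : KK := algebraMap (MvPolynomial (Fin 2) ℚ) KK (MvPolynomial.X 0)

/-- The rational function `v`. -/
def vv : KK := algebraMap (MvPolynomial (Fin 2) ℚ) KK (MvPolynomial.X 1)

/-- The stringy `E`-function of a Gorenstein polytope `S` of index `r` (with `m₀` the unique
interior lattice point of `r S`):
`E_st(S; u,v) = (uv)^{-r} ∑_{∅ ≤ F ≤ S} (-u)^{dim F + 1} S̃(F, u⁻¹ v) S̃(F^*, uv) ∈ ℚ(u,v)`. -/
def Est {n : ℕ} (S : Set (Pt n)) (r : ℕ) (m₀ : Pt n) : KK :=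
  (uu * vv) ^ (-(r : ℤ)) *
    ∑ᶠ F ∈ {F : Set (Pt n) | IsFaceOf F S},
      (-uu) ^ (dimP F + 1) * Polynomial.aeval (uu⁻¹ * vv) (StildeL (stdL n) F) *
        Polynomial.aeval (uu * vv) (StildeL (dualLatOf S) (faceDual S r m₀ F))

/-- An element of `ℚ(u,v)` "is a polynomial": it lies in `ℤ[u,v]`. -/
def IsPolyEst (e : KK) : Prop :=
  ∃ p : MvPolynomial (Fin 2) ℤ,
    e = MvPolynomial.aeval (fun i : Fin 2 => if i = 0 then uu else vv) p

/-- `S` is a join of its faces `F` and `G`. -/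
def IsJoin {n : ℕ} (S F G : Set (Pt n)) : Prop :=
  IsFaceOf F S ∧ IsFaceOf G S ∧ S = convexHull ℝ (F ∪ G) ∧ dimP F + dimP G = dimP S - 1

/-- `S` and `T` are isomorphic lattice polytopes (with respect to the standard lattice):
there is an affine transformation of the ambient space mapping the lattice onto itself
and `S` onto `T`. -/
def IsoLat {n : ℕ} (S T : Set (Pt n)) : Prop :=
  ∃ A : Pt n ≃ᵃ[ℝ] Pt n, (∀ x, isLatticePt x ↔ isLatticePt (A x)) ∧ A '' S = T

/-- The Cayley polytope `F * G` of two polytopes: the convex hull of `F × {1}` and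
`G × {0}`. -/
def cayley2 {n : ℕ} (F G : Set (Pt n)) : Set (Pt (n + 1)) :=
  convexHull ℝ (emb1 '' F ∪ emb0 '' G)

/-- `S` is a Cayley join of its faces `F` and `G`:
`dim F + dim G = dim S - 1` and the Cayley polytope `F * G` is isomorphic (as a lattice
polytope) to `S` (embedded at height 0). -/
def IsCayleyJoin {n : ℕ} (S F G : Set (Pt n)) : Prop :=
  IsFaceOf F S ∧ IsFaceOf G S ∧ dimP F + dimP G = dimP S - 1 ∧
  IsoLat (cayley2 F G) (emb0 '' S)

/-- `S` is a ℤ-join of its faces `F` and `G`: `S` is the convex hull of `F ∪ G` and the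
natural map `M(F) ⊕ M(G) → M ⊕ ℤ` is an isomorphism, where `M(F) = lin(F × {1}) ∩ (M ⊕ ℤ)`;
i.e. every lattice point of `M ⊕ ℤ` is uniquely the sum of a lattice point in `lin(F × {1})`
and a lattice point in `lin(G × {1})`. -/
def IsZJoin {n : ℕ} (S F G : Set (Pt n)) : Prop :=
  IsFaceOf F S ∧ IsFaceOf G S ∧ S = convexHull ℝ (F ∪ G) ∧
  ∀ x : Pt (n + 1), isLatticePt x →
    ∃! p : Pt (n + 1) × Pt (n + 1),
      (isLatticePt p.1 ∧ p.1 ∈ Wspan F) ∧ (isLatticePt p.2 ∧ p.2 ∈ Wspan G) ∧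
        x = p.1 + p.2

/-- The points of the standard lattice lying in a subspace `W`. -/
def latIn {n : ℕ} (W : Submodule ℝ (Pt n)) : Set (Pt n) := {x | isLatticePt x ∧ x ∈ W}

/-- `S` (with lattice `LS`) and `T` (with lattice `LT`) are dual Gorenstein polytopes,
with respect to the dot product pairing: the pairing between the spans is perfect, the
lattices are dual to each other, and the cones over `S` and `T` are dual reflexive
Gorenstein cones, each being the support polytope of the dual of the other (cut out by the
interior lattice points `nf` resp. `mm`). -/
def IsDualGorPair {n : ℕ} (LS LT S T : Set (Pt n)) : Prop :=
  (∀ x ∈ Submodule.span ℝ S, (∀ y ∈ Submodule.span ℝ T, dot x y = 0) → x = 0) ∧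
  (∀ y ∈ Submodule.span ℝ T, (∀ x ∈ Submodule.span ℝ S, dot x y = 0) → y = 0) ∧
  IsLat LS S ∧ IsLat LT T ∧
  LT = {y | y ∈ Submodule.span ℝ T ∧ ∀ x ∈ LS, ∃ k : ℤ, dot x y = (k : ℝ)} ∧
  LS = {x | x ∈ Submodule.span ℝ S ∧ ∀ y ∈ LT, ∃ k : ℤ, dot x y = (k : ℝ)} ∧
  ∃ nf ∈ LT, ∃ mm ∈ LS,
    (∀ x ∈ S, dot nf x = 1) ∧ (∀ y ∈ T, dot mm y = 1) ∧
    T = {y | y ∈ Submodule.span ℝ T ∧ (∀ x ∈ S, 0 ≤ dot x y) ∧ dot mm y = 1} ∧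
    S = {x | x ∈ Submodule.span ℝ S ∧ (∀ y ∈ T, 0 ≤ dot x y) ∧ dot nf x = 1}

/-- Orthogonal projection onto the orthogonal complement of `U` (w.r.t. the dot product);
this realizes the quotient of the ambient space by `U`. -/
def perpProj {m : ℕ} (U : Submodule ℝ (Pt m)) : Pt m → Pt m :=
  fun x =>
    (WithLp.linearEquiv 2 ℝ (Fin m → ℝ))
      ((Submodule.orthogonalProjectionOnto
          (Submodule.map (WithLp.linearEquiv 2 ℝ (Fin m → ℝ)).symm.toLinearMap U)ᗮ
          ((WithLp.linearEquiv 2 ℝ (Fin m → ℝ)).symm x) : EuclideanSpace ℝ (Fin m)))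

/-- The `i`-th "unit vector" used for Cayley polytopes: the standard basis vector `e_i` of
`ℤ^{r-1}` for `i < r - 1`, and `0` for `i = r - 1` (the last coordinate is deleted). -/
def unitVec (r : ℕ) (i : Fin r) : Pt (r - 1) := fun j => if (j : ℕ) = (i : ℕ) then 1 else 0

/-- The embedding `x ↦ (x, e_i)` used in the definition of Cayley polytopes. -/
def cayleyEmb {d r : ℕ} (i : Fin r) : Pt d → Pt (d + (r - 1)) :=
  fun x => Fin.append x (unitVec r i)

/-- The Cayley polytope `P_1 * ⋯ * P_r` of a family of polytopes in `ℝ^d`, as a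
(full-dimensional) lattice polytope in `ℝ^{d + r - 1}`. -/
def cayleyFam {d r : ℕ} (Q : Fin r → Set (Pt d)) : Set (Pt (d + (r - 1))) :=
  convexHull ℝ (⋃ i, cayleyEmb i '' Q i)

/-- The face of the Cayley polytope corresponding to a subfamily indexed by `I`. -/
def subCayley {d r : ℕ} (Q : Fin r → Set (Pt d)) (I : Finset (Fin r)) :
    Set (Pt (d + (r - 1))) :=
  convexHull ℝ (⋃ i ∈ I, cayleyEmb i '' Q i)

/-- `S` is an irreducible Gorenstein polytope: it is a nonempty Gorenstein polytope of some
index `r`, with no proper face `F` (`∅ ≠ F ≠ S`) such that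
`codeg F + codeg F^* = r`. -/
def IsIrredGor {n : ℕ} (S : Set (Pt n)) : Prop :=
  S.Nonempty ∧ ∃ r, IsGorensteinL (stdL n) S r ∧
    ∀ m₀, GorWitness (stdL n) S r m₀ →
      ∀ F, IsFaceOf F S → F ≠ ∅ → F ≠ S →
        codegL (stdL n) F + codegL (dualLatOf S) (faceDual S r m₀ F) ≠ (r : ℤ)

/-- `Q` is a nef-partition of the reflexive polytope `P ⊂ ℝ^d`: each `Q i` is a nonempty
lattice polytope containing `0` and `P = Q 1 + ⋯ + Q r` (Minkowski sum) is a reflexive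
polytope of dimension `d`. -/
def IsNefPartition {d r : ℕ} (Q : Fin r → Set (Pt d)) (P : Set (Pt d)) : Prop :=
  (∀ i, (Q i).Nonempty ∧ IsLat (stdL d) (Q i) ∧ (0 : Pt d) ∈ Q i) ∧
  P = ∑ i, Q i ∧ IsReflexiveL (stdL d) P ∧ dimP P = (d : ℤ)

/-- The nef-partition `Q` is irreducible: no nonempty proper subfamily has `0` in the
relative interior of its Minkowski sum. -/
def IsIrredNef {d r : ℕ} (Q : Fin r → Set (Pt d)) : Prop :=
  ∀ I : Finset (Fin r), I.Nonempty → I ≠ Finset.univ →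
    (0 : Pt d) ∉ intrinsicInterior ℝ (∑ i ∈ I, Q i)

/-- `S` is a ℤ-join of the faces `F j`: `S` is the convex hull of their union, and every
lattice point of `M ⊕ ℤ` decomposes uniquely as a sum of lattice points in the spans
`lin(F j × {1})`. -/
def IsMultiZJoin {n k : ℕ} (S : Set (Pt n)) (F : Fin k → Set (Pt n)) : Prop :=
  (∀ j, IsFaceOf (F j) S) ∧ S = convexHull ℝ (⋃ j, F j) ∧
  ∀ x : Pt (n + 1), isLatticePt x →
    ∃! f : Fin k → Pt (n + 1),
      (∀ j, isLatticePt (f j) ∧ f j ∈ Wspan (F j)) ∧ x = ∑ j, f j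

/-- The nef-partition `Q` splits as a direct sum over `ℤ` with respect to the partition
`I` of the index set: each subfamily sums to a reflexive polytope (w.r.t. the induced
lattice), and the lattice `M` is the direct sum of the lattices `M_j = lin(P_{I_j}) ∩ M`. -/
def SplitsOverZ {d r k : ℕ} (Q : Fin r → Set (Pt d)) (I : Fin k → Finset (Fin r)) : Prop :=
  (∀ j, IsReflexiveL (stdL d) (∑ i ∈ I j, Q i)) ∧
  ∀ x : Pt d, isLatticePt x →
    ∃! f : Fin k → Pt d,
      (∀ j, isLatticePt (f j) ∧ f j ∈ Submodule.span ℝ ((∑ i ∈ I j, Q i : Set (Pt d)))) ∧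
        x = ∑ j, f j



/-! ### Auxiliary lemmas -/

section Aux

lemma append_apply {d m : ℕ} (x : Pt d) (z : Pt m) (i : Fin (d + m)) :
    Fin.append x z i = if h : (i : ℕ) < d then x ⟨i, h⟩ else z ⟨(i : ℕ) - d, by omega⟩ := by
  induction i using Fin.addCases with
  | left j => simp [Fin.append_left]
  | right j =>
    rw [Fin.append_right]
    have h : ¬ ((Fin.natAdd d j : ℕ) < d) := by simp
    rw [dif_neg h]
    congr 1
    ext
    simp

lemma snoc_apply {nn : ℕ} (y : Pt nn) (c : ℝ) (i : Fin (nn + 1)) :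
    (Fin.snoc y c : Pt (nn + 1)) i = if h : (i : ℕ) < nn then y ⟨i, h⟩ else c := by
  induction i using Fin.lastCases with
  | last => simp
  | cast j => simp [Fin.snoc_castSucc]

lemma latt_add {n : ℕ} {x y : Pt n} (hx : isLatticePt x) (hy : isLatticePt y) :
    isLatticePt (x + y) := by
  intro i; obtain ⟨a, ha⟩ := hx i; obtain ⟨b, hb⟩ := hy i
  exact ⟨a + b, by simp [ha, hb]⟩

lemma latt_zero {n : ℕ} : isLatticePt (0 : Pt n) := fun i => ⟨0, by simp⟩

lemma latt_smul {n : ℕ} {a : ℝ} {x : Pt n} (ha : ∃ k : ℤ, a = (k : ℝ)) (hx : isLatticePt x) :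
    isLatticePt (a • x) := by
  intro i; obtain ⟨k, hk⟩ := ha; obtain ⟨b, hb⟩ := hx i
  exact ⟨k * b, by simp [hk, hb]⟩

lemma latt_sum {n : ℕ} {ι : Type*} (s : Finset ι) (f : ι → Pt n)
    (h : ∀ i ∈ s, isLatticePt (f i)) : isLatticePt (∑ i ∈ s, f i) := by
  classical
  induction s using Finset.induction_on with
  | empty => simpa using latt_zero
  | insert _ _ hx ih =>
    rw [Finset.sum_insert hx]
    exact latt_add (h _ (Finset.mem_insert_self _ _))
      (ih fun i hi => h i (Finset.mem_insert_of_mem hi))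

lemma dot_comm {n : ℕ} (x y : Pt n) : dot x y = dot y x := by
  unfold dot; exact Finset.sum_congr rfl fun i _ => mul_comm _ _

/-- Standard basis vector. -/
def sbv {n : ℕ} (l : Fin n) : Pt n := fun j => if l = j then 1 else 0

lemma dot_sbv {n : ℕ} (y : Pt n) (l : Fin n) : dot y (sbv l) = y l := by
  unfold dot sbv
  rw [Finset.sum_eq_single l] <;> simp +contextual [eq_comm]

lemma latt_sbv {n : ℕ} (l : Fin n) : isLatticePt (sbv l) := by
  intro i; unfold sbv
  by_cases h : l = i
  · exact ⟨1, by simp [h]⟩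
  · exact ⟨0, by simp [h]⟩

lemma dot_zero_self {n : ℕ} (x : Pt n) (h : dot x x = 0) : x = 0 := by
  have : ∀ i ∈ Finset.univ, x i * x i = 0 := by
    rw [← Finset.sum_eq_zero_iff_of_nonneg (fun i _ => mul_self_nonneg (x i))]
    exact h
  funext i
  exact mul_self_eq_zero.mp (this i (Finset.mem_univ i))

lemma span_convexHull {n : ℕ} (s : Set (Pt n)) :
    Submodule.span ℝ (convexHull ℝ s) = Submodule.span ℝ s := by
  apply le_antisymm
  · rw [Submodule.span_le]
    exact convexHull_min Submodule.subset_span (Submodule.span ℝ s).convex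
  · exact Submodule.span_mono (subset_convexHull ℝ s)

/-- Index of the first block. -/
def idx1 {d m : ℕ} (l : Fin d) : Fin (d + m + 1) := ⟨l, by omega⟩

/-- Index of the middle block. -/
def idx2 {d m : ℕ} (i' : Fin m) : Fin (d + m + 1) := ⟨d + i', by omega⟩

/-- Last index. -/
def idxh (d m : ℕ) : Fin (d + m + 1) := ⟨d + m, by omega⟩

@[simp] lemma idx1_val {d m : ℕ} (l : Fin d) : ((idx1 l : Fin (d + m + 1)) : ℕ) = (l : ℕ) := rfl
@[simp] lemma idx2_val {d m : ℕ} (i' : Fin m) :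
    ((idx2 i' : Fin (d + m + 1)) : ℕ) = d + (i' : ℕ) := rfl
@[simp] lemma idxh_val {d m : ℕ} : ((idxh d m : Fin (d + m + 1)) : ℕ) = d + m := rfl

lemma idx_cases {d m : ℕ} (p : Fin (d + m + 1)) :
    (∃ l, p = idx1 l) ∨ (∃ i', p = idx2 i') ∨ p = idxh d m := by
  by_cases h : (p : ℕ) < d
  · exact Or.inl ⟨⟨p, h⟩, by ext; rfl⟩
  · by_cases h2 : (p : ℕ) < d + m
    · exact Or.inr (Or.inl ⟨⟨(p : ℕ) - d, by omega⟩, by ext; show (p:ℕ) = d + ((p:ℕ) - d); omega⟩)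
    · refine Or.inr (Or.inr ?_)
      ext
      show (p : ℕ) = d + m
      have := p.isLt
      omega

/-- Embedding `ℝ^d → ℝ^{d+m+1}`, `x ↦ (x,0,0)`, as a linear map. -/
def iot {d m : ℕ} : Pt d →ₗ[ℝ] Pt (d + m + 1) where
  toFun y := fun p => if h : (p : ℕ) < d then y ⟨p, h⟩ else 0
  map_add' a b := by funext p; by_cases h : (p : ℕ) < d <;> simp [h]
  map_smul' c a := by funext p; by_cases h : (p : ℕ) < d <;> simp [h]

lemma iot_app1 {d m : ℕ} (y : Pt d) (l : Fin d) : (iot (m := m) y) (idx1 l) = y l := by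
  show (if h : ((idx1 l : Fin (d + m + 1)) : ℕ) < d then y ⟨_, h⟩ else 0) = y l
  simp only [idx1_val]
  erw [dif_pos l.isLt]

lemma iot_app2 {d m : ℕ} (y : Pt d) (i' : Fin m) : (iot y) (idx2 i') = 0 := by
  show (if h : ((idx2 i' : Fin (d + m + 1)) : ℕ) < d then y ⟨_, h⟩ else 0) = 0
  simp only [idx2_val]
  erw [dif_neg (by omega)]

lemma iot_apph {d m : ℕ} (y : Pt d) : (iot y) (idxh d m) = 0 := by
  show (if h : ((idxh d m : Fin (d + m + 1)) : ℕ) < d then y ⟨_, h⟩ else 0) = 0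
  simp only [idxh_val]
  erw [dif_neg (by omega)]

lemma iot_latt {d m : ℕ} {y : Pt d} (hy : isLatticePt y) : isLatticePt (iot (m := m) y) := by
  intro p
  show ∃ k : ℤ, dite _ _ _ = (k : ℝ)
  by_cases h : (p : ℕ) < d
  · rw [dif_pos h]; exact hy _
  · rw [dif_neg h]; exact ⟨0, by simp⟩

lemma iot_inj {d m : ℕ} : Function.Injective (iot (d := d) (m := m)) := by
  intro a b hab
  funext l
  have := congrFun hab (idx1 (m := m) l)
  rwa [iot_app1, iot_app1] at this

end Aux

section Cayley

variable {d m : ℕ}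

/-- The generators of the Cayley polytope, at height 1. -/
def gen (i : Fin (m + 1)) (x : Pt d) : Pt (d + m + 1) := emb1 (cayleyEmb (r := m + 1) i x)

lemma gen_app1 (i : Fin (m + 1)) (x : Pt d) (l : Fin d) : gen i x (idx1 l) = x l := by
  show (Fin.snoc (Fin.append x (unitVec (m + 1) i)) 1 : Pt (d + m + 1)) (idx1 l) = x l
  rw [snoc_apply]
  simp only [idx1_val]
  erw [dif_pos (show (l : ℕ) < d + m by omega)]
  rw [append_apply]
  rw [dif_pos (show ((l : ℕ)) < d from l.isLt)]

lemma gen_app2 (i : Fin (m + 1)) (x : Pt d) (i' : Fin m) :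
    gen i x (idx2 i') = if (i' : ℕ) = (i : ℕ) then 1 else 0 := by
  show (Fin.snoc (Fin.append x (unitVec (m + 1) i)) 1 : Pt (d + m + 1)) (idx2 i') = _
  rw [snoc_apply]
  simp only [idx2_val]
  erw [dif_pos (show d + (i' : ℕ) < d + m by omega)]
  rw [append_apply]
  rw [dif_neg (show ¬ ((⟨d + (i' : ℕ), by omega⟩ : Fin (d + m)) : ℕ) < d from by
    show ¬ d + (i' : ℕ) < d; omega)]
  show unitVec (m + 1) i ⟨d + (i' : ℕ) - d, _⟩ = _
  unfold unitVec
  congr 1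
  simp

lemma gen_apph (i : Fin (m + 1)) (x : Pt d) : gen i x (idxh d m) = 1 := by
  show (Fin.snoc (Fin.append x (unitVec (m + 1) i)) 1 : Pt (d + m + 1)) (idxh d m) = 1
  rw [snoc_apply]
  simp only [idxh_val]
  erw [dif_neg (by omega)]

/-- The vertical generator `u i = gen i 0`. -/
def uvec (d : ℕ) (i : Fin (m + 1)) : Pt (d + m + 1) := gen i 0

lemma gen_eq_iot_add_uvec (i : Fin (m + 1)) (x : Pt d) : gen i x = iot x + uvec d i := by
  funext p
  rcases idx_cases p with ⟨l, rfl⟩ | ⟨i', rfl⟩ | rfl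
  · show _ = iot x (idx1 l) + uvec d i (idx1 l)
    rw [gen_app1, iot_app1]
    show x l = x l + gen i 0 (idx1 l)
    rw [gen_app1]
    simp
  · show _ = iot x (idx2 i') + uvec d i (idx2 i')
    rw [gen_app2, iot_app2]
    show _ = 0 + gen i 0 (idx2 i')
    rw [gen_app2]
    simp
  · show _ = iot x (idxh d m) + uvec d i (idxh d m)
    rw [gen_apph, iot_apph]
    show (1 : ℝ) = 0 + gen i 0 (idxh d m)
    rw [gen_apph]
    simp

lemma uvec_latt (i : Fin (m + 1)) : isLatticePt (uvec d i) := by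
  intro p
  rcases idx_cases p with ⟨l, rfl⟩ | ⟨i', rfl⟩ | rfl
  · rw [show uvec d i (idx1 l) = (0 : Pt d) l from gen_app1 i 0 l]
    exact ⟨0, by simp⟩
  · rw [show uvec d i (idx2 i') = _ from gen_app2 i 0 i']
    by_cases h : (i' : ℕ) = (i : ℕ)
    · exact ⟨1, by simp [h]⟩
    · exact ⟨0, by simp [h]⟩
  · rw [show uvec d i (idxh d m) = 1 from gen_apph i 0]
    exact ⟨1, by simp⟩

end Cayley


section Cayley2

variable {d m : ℕ}

/-- Linear part of `emb1`. -/
def sn0 {nn : ℕ} : Pt nn →ₗ[ℝ] Pt (nn + 1) where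
  toFun y := fun p => if h : (p : ℕ) < nn then y ⟨p, h⟩ else 0
  map_add' a b := by funext p; by_cases h : (p : ℕ) < nn <;> simp [h]
  map_smul' c a := by funext p; by_cases h : (p : ℕ) < nn <;> simp [h]

/-- `emb1` as an affine map. -/
def emb1Aff {nn : ℕ} : Pt nn →ᵃ[ℝ] Pt (nn + 1) where
  toFun := emb1
  linear := sn0
  map_vadd' p v := by
    show emb1 (v + p) = sn0 v + emb1 p
    funext q
    show (Fin.snoc (v + p) 1 : Pt (nn + 1)) q = sn0 v q + (Fin.snoc p 1 : Pt (nn + 1)) q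
    rw [snoc_apply, snoc_apply]
    show _ = dite _ _ _ + _
    by_cases h : (q : ℕ) < nn
    · rw [dif_pos h, dif_pos h, dif_pos h]; rfl
    · rw [dif_neg h, dif_neg h, dif_neg h]; simp

lemma emb1_image_convexHull {nn : ℕ} (s : Set (Pt nn)) :
    emb1 '' convexHull ℝ s = convexHull ℝ (emb1 '' s) :=
  emb1Aff.image_convexHull s

lemma Wspan_convexHull {nn : ℕ} (s : Set (Pt nn)) : Wspan (convexHull ℝ s) = Wspan s := by
  unfold Wspan
  rw [emb1_image_convexHull, span_convexHull]

/-- Projection to the first block, as a linear map. -/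
def pi1 {d m : ℕ} : Pt (d + m + 1) →ₗ[ℝ] Pt d where
  toFun v := fun l => v (idx1 l)
  map_add' a b := by funext l; simp
  map_smul' c a := by funext l; simp

lemma pi1_latt {v : Pt (d + m + 1)} (hv : isLatticePt v) : isLatticePt (pi1 (d := d) (m := m) v) :=
  fun l => hv (idx1 l)

lemma pi1_iot (y : Pt d) : pi1 (m := m) (iot y) = y := by
  funext l
  exact iot_app1 y l

lemma pi1_gen (i : Fin (m + 1)) (x : Pt d) : pi1 (gen i x) = x := by
  funext l
  exact gen_app1 i x l

/-- The Minkowski sum of a subfamily. -/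
def SJ (Q : Fin (m + 1) → Set (Pt d)) (J : Finset (Fin (m + 1))) : Set (Pt d) :=
  (∑ i ∈ J, Q i : Set (Pt d))

lemma mem_SJ_of (Q : Fin (m + 1) → Set (Pt d)) (J : Finset (Fin (m + 1)))
    (h0 : ∀ i, (0 : Pt d) ∈ Q i) {i : Fin (m + 1)} (hi : i ∈ J) {x : Pt d} (hx : x ∈ Q i) :
    x ∈ SJ Q J := by
  classical
  rw [SJ, Set.mem_finset_sum]
  refine ⟨fun i'' => if i'' = i then x else 0, fun {i''} _ => ?_, ?_⟩
  · show (if i'' = i then x else 0) ∈ Q i''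
    by_cases h : i'' = i
    · rw [if_pos h, h]; exact hx
    · rw [if_neg h]; exact h0 i''
  · rw [Finset.sum_ite_eq' J i (fun _ => x), if_pos hi]

lemma zero_mem_SJ (Q : Fin (m + 1) → Set (Pt d)) (J : Finset (Fin (m + 1)))
    (h0 : ∀ i, (0 : Pt d) ∈ Q i) : (0 : Pt d) ∈ SJ Q J := by
  classical
  rw [SJ, Set.mem_finset_sum]
  exact ⟨0, fun {i''} _ => h0 i'', by simp⟩

lemma gen_mem_W (Q : Fin (m + 1) → Set (Pt d)) (J : Finset (Fin (m + 1)))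
    {i : Fin (m + 1)} (hi : i ∈ J) {x : Pt d} (hx : x ∈ Q i) :
    gen i x ∈ Wspan (subCayley Q J) := by
  apply Submodule.subset_span
  refine ⟨cayleyEmb i x, ?_, rfl⟩
  apply subset_convexHull
  exact Set.mem_iUnion₂.2 ⟨i, hi, ⟨x, hx, rfl⟩⟩

lemma uvec_mem_W (Q : Fin (m + 1) → Set (Pt d)) (J : Finset (Fin (m + 1)))
    (h0 : ∀ i, (0 : Pt d) ∈ Q i) {i : Fin (m + 1)} (hi : i ∈ J) :
    uvec d i ∈ Wspan (subCayley Q J) :=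
  gen_mem_W Q J hi (h0 i)

lemma iot_mem_W (Q : Fin (m + 1) → Set (Pt d)) (J : Finset (Fin (m + 1)))
    (h0 : ∀ i, (0 : Pt d) ∈ Q i) {v : Pt d} (hv : v ∈ Submodule.span ℝ (SJ Q J)) :
    iot v ∈ Wspan (subCayley Q J) := by
  classical
  have hle : Submodule.span ℝ (SJ Q J) ≤
      Submodule.comap (iot (m := m)) (Wspan (subCayley Q J)) := by
    rw [Submodule.span_le]
    intro x hx
    rw [SJ, Set.mem_finset_sum] at hx
    obtain ⟨g, hg, hsum⟩ := hx
    show iot x ∈ Wspan (subCayley Q J)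
    rw [← hsum, map_sum]
    apply Submodule.sum_mem
    intro i hi
    have heq : iot (g i) = gen i (g i) - uvec d i := by
      rw [gen_eq_iot_add_uvec]; abel
    have h2 : gen i (g i) - uvec d i ∈ Wspan (subCayley Q J) :=
      Submodule.sub_mem _ (gen_mem_W Q J hi (hg hi)) (uvec_mem_W Q J h0 hi)
    exact heq.symm ▸ h2
  exact Submodule.mem_comap.1 (hle hv)

/-- The linear conditions satisfied by the span of a sub-Cayley polytope. -/
def Wcond (Q : Fin (m + 1) → Set (Pt d)) (J : Finset (Fin (m + 1))) :
    Submodule ℝ (Pt (d + m + 1)) where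
  carrier := {v | pi1 v ∈ Submodule.span ℝ (SJ Q J) ∧
    (∀ i' : Fin m, i'.castSucc ∉ J → v (idx2 i') = 0) ∧
    (Fin.last m ∉ J → v (idxh d m) =
      ∑ i' ∈ Finset.univ.filter (fun i' : Fin m => i'.castSucc ∈ J), v (idx2 i'))}
  add_mem' := by
    rintro a b ⟨ha1, ha2, ha3⟩ ⟨hb1, hb2, hb3⟩
    refine ⟨by rw [map_add]; exact Submodule.add_mem _ ha1 hb1, ?_, ?_⟩
    · intro i' hi'
      show a _ + b _ = 0
      rw [ha2 i' hi', hb2 i' hi', add_zero]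
    · intro hl
      show a _ + b _ = _
      rw [ha3 hl, hb3 hl, ← Finset.sum_add_distrib]
      rfl
  zero_mem' := by
    refine ⟨by rw [map_zero]; exact Submodule.zero_mem _, fun _ _ => rfl, fun _ => ?_⟩
    simp
  smul_mem' := by
    rintro c a ⟨ha1, ha2, ha3⟩
    refine ⟨by rw [map_smul]; exact Submodule.smul_mem _ _ ha1, ?_, ?_⟩
    · intro i' hi'
      show c * a _ = 0
      rw [ha2 i' hi', mul_zero]
    · intro hl
      show c * a _ = _
      rw [ha3 hl, Finset.mul_sum]
      rfl

lemma W_le_Wcond (Q : Fin (m + 1) → Set (Pt d)) (J : Finset (Fin (m + 1)))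
    (h0 : ∀ i, (0 : Pt d) ∈ Q i) : Wspan (subCayley Q J) ≤ Wcond Q J := by
  classical
  have : Wspan (subCayley Q J) = Submodule.span ℝ (emb1 '' ⋃ i ∈ J, cayleyEmb i '' Q i) := by
    unfold subCayley
    rw [Wspan_convexHull]
    rfl
  rw [this, Submodule.span_le]
  rintro _ ⟨y, hy, rfl⟩
  obtain ⟨i, hi, hy2⟩ := Set.mem_iUnion₂.1 hy
  obtain ⟨x, hx, rfl⟩ := hy2
  show gen i x ∈ Wcond Q J
  refine ⟨?_, ?_, ?_⟩
  · rw [pi1_gen]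
    exact Submodule.subset_span (mem_SJ_of Q J h0 hi hx)
  · intro i' hi'
    rw [gen_app2, if_neg]
    intro hval
    exact hi' (by rw [show i'.castSucc = i from Fin.ext hval]; exact hi)
  · intro hl
    have hne : i ≠ Fin.last m := fun h => hl (h ▸ hi)
    have hvm : (i : ℕ) < m := Fin.val_lt_last hne
    have hsum : ∑ i' ∈ Finset.univ.filter (fun i' : Fin m => i'.castSucc ∈ J),
        (gen i x) (idx2 i') = 1 := by
      rw [Finset.sum_eq_single_of_mem (⟨(i : ℕ), hvm⟩ : Fin m)]
      · rw [gen_app2, if_pos rfl]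
      · exact Finset.mem_filter.2 ⟨Finset.mem_univ _,
          by rw [show (⟨(i : ℕ), hvm⟩ : Fin m).castSucc = i from Fin.ext rfl]; exact hi⟩
      · intro b _ hb
        rw [gen_app2, if_neg]
        intro hval
        exact hb (Fin.ext hval)
    rw [gen_apph, hsum]

end Cayley2


section Aux2

lemma exIntSum {ι : Type*} (s : Finset ι) (f : ι → ℝ) (h : ∀ i ∈ s, ∃ k : ℤ, f i = (k : ℝ)) :
    ∃ k : ℤ, ∑ i ∈ s, f i = (k : ℝ) := by
  classical
  induction s using Finset.induction_on with
  | empty => exact ⟨0, by simp⟩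
  | insert _ _ hx ih =>
    obtain ⟨a, ha⟩ := h _ (Finset.mem_insert_self _ _)
    obtain ⟨b, hb⟩ := ih fun i hi => h i (Finset.mem_insert_of_mem hi)
    exact ⟨a + b, by rw [Finset.sum_insert hx, ha, hb]; push_cast; ring⟩

end Aux2

section Decomp

variable {d m k : ℕ}

lemma forward_decomp (Q : Fin (m + 1) → Set (Pt d)) (I : Fin k → Finset (Fin (m + 1)))
    (h0 : ∀ i, (0 : Pt d) ∈ Q i)
    (hdisj : ∀ j j', j ≠ j' → Disjoint (I j) (I j'))
    (hcover : Finset.univ.biUnion I = Finset.univ)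
    (hsp : ∀ x : Pt d, isLatticePt x → ∃! f : Fin k → Pt d,
      (∀ j, isLatticePt (f j) ∧
        f j ∈ Submodule.span ℝ ((∑ i ∈ I j, Q i : Set (Pt d)))) ∧ x = ∑ j, f j)
    (x : Pt (d + m + 1)) (hx : isLatticePt x) :
    ∃! F : Fin k → Pt (d + m + 1),
      (∀ j, isLatticePt (F j) ∧ F j ∈ Wspan (subCayley Q (I j))) ∧ x = ∑ j, F j := by
  classical
  have hmem : ∀ i : Fin (m + 1), ∃ j, i ∈ I j := by
    intro i
    have : i ∈ Finset.univ.biUnion I := by rw [hcover]; exact Finset.mem_univ i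
    obtain ⟨j, _, hj⟩ := Finset.mem_biUnion.1 this
    exact ⟨j, hj⟩
  set c : Fin (m + 1) → ℝ := fun i =>
    if h : (i : ℕ) < m then x (idx2 ⟨i, h⟩)
    else x (idxh d m) - ∑ i' : Fin m, x (idx2 i') with hc
  have hcint : ∀ i, ∃ kk : ℤ, c i = (kk : ℝ) := by
    intro i
    simp only [hc]
    by_cases h : (i : ℕ) < m
    · rw [dif_pos h]; exact hx _
    · rw [dif_neg h]
      obtain ⟨a, ha⟩ := hx (idxh d m)
      obtain ⟨b, hb⟩ := exIntSum Finset.univ (fun i' : Fin m => x (idx2 i')) fun i' _ => hx _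
      exact ⟨a - b, by rw [ha, hb]; push_cast; ring⟩
  have hc2 : ∀ i' : Fin m, c i'.castSucc = x (idx2 i') := by
    intro i'
    simp only [hc]
    have h : ((i'.castSucc : Fin (m + 1)) : ℕ) < m := i'.isLt
    rw [dif_pos h]
    congr 1
  have hclast : c (Fin.last m) = x (idxh d m) - ∑ i' : Fin m, x (idx2 i') := by
    simp only [hc]
    rw [dif_neg (by simp)]
  set y : Pt d := pi1 x with hy
  obtain ⟨f₀, ⟨hf₀, hf₀sum⟩, huniq⟩ := hsp y (pi1_latt hx)
  set F : Fin k → Pt (d + m + 1) := fun j => iot (f₀ j) + ∑ i ∈ I j, c i • uvec d i with hF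
  -- coordinates of F
  have Fcoord1 : ∀ j l, F j (idx1 l) = f₀ j l := by
    intro j l
    rw [hF]
    show iot (f₀ j) (idx1 l) + (∑ i ∈ I j, c i • uvec d i) (idx1 l) = _
    rw [iot_app1, Finset.sum_apply]
    have : ∀ i ∈ I j, (c i • uvec d i) (idx1 l) = 0 := by
      intro i _
      show c i * uvec d i (idx1 l) = 0
      rw [show uvec d i (idx1 l) = (0 : Pt d) l from gen_app1 i 0 l]
      simp
    rw [Finset.sum_congr rfl this, Finset.sum_const_zero, add_zero]
  have Fcoord2 : ∀ j (i' : Fin m), F j (idx2 i') =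
      if i'.castSucc ∈ I j then c i'.castSucc else 0 := by
    intro j i'
    rw [hF]
    show iot (f₀ j) (idx2 i') + (∑ i ∈ I j, c i • uvec d i) (idx2 i') = _
    rw [iot_app2, Finset.sum_apply, zero_add]
    have hval : ∀ i : Fin (m + 1), (c i • uvec d i) (idx2 i') =
        c i * (if (i' : ℕ) = (i : ℕ) then 1 else 0) := by
      intro i
      show c i * uvec d i (idx2 i') = _
      rw [show uvec d i (idx2 i') = _ from gen_app2 i 0 i']
    by_cases hmemJ : i'.castSucc ∈ I j
    · rw [if_pos hmemJ]
      rw [Finset.sum_eq_single_of_mem i'.castSucc hmemJ]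
      · rw [hval, if_pos (Fin.coe_castSucc i').symm, mul_one]
      · intro b _ hb
        rw [hval, if_neg (fun hvaleq => hb (Fin.ext hvaleq.symm)), mul_zero]
    · rw [if_neg hmemJ]
      apply Finset.sum_eq_zero
      intro i hi
      rw [hval, if_neg, mul_zero]
      intro hvaleq
      exact hmemJ (by rw [show i'.castSucc = i from Fin.ext hvaleq]; exact hi)
  have Fcoordh : ∀ j, F j (idxh d m) = ∑ i ∈ I j, c i := by
    intro j
    rw [hF]
    show iot (f₀ j) (idxh d m) + (∑ i ∈ I j, c i • uvec d i) (idxh d m) = _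
    rw [iot_apph, Finset.sum_apply, zero_add]
    apply Finset.sum_congr rfl
    intro i _
    show c i * uvec d i (idxh d m) = c i
    rw [show uvec d i (idxh d m) = 1 from gen_apph i 0, mul_one]
  have hsum_biUnion : ∀ g : Fin (m + 1) → Pt (d + m + 1),
      ∑ j, ∑ i ∈ I j, g i = ∑ i, g i := by
    intro g
    rw [← Finset.sum_biUnion, hcover]
    intro j _ j' _ hjj'
    exact hdisj j j' hjj'
  have hFlatt : ∀ j, isLatticePt (F j) := by
    intro j
    exact latt_add (iot_latt (hf₀ j).1)
      (latt_sum _ _ fun i _ => latt_smul (hcint i) (uvec_latt i))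
  have hFmem : ∀ j, F j ∈ Wspan (subCayley Q (I j)) := by
    intro j
    exact Submodule.add_mem _ (iot_mem_W Q (I j) h0 (hf₀ j).2)
      (Submodule.sum_mem _ fun i hi => Submodule.smul_mem _ _ (uvec_mem_W Q (I j) h0 hi))
  have hcsum : ∑ i, c i = x (idxh d m) := by
    rw [Fin.sum_univ_castSucc]
    rw [Finset.sum_congr rfl fun i' _ => hc2 i', hclast]
    ring
  have hFsum : x = ∑ j, F j := by
    have : ∑ j, F j = iot y + ∑ i, c i • uvec d i := by
      rw [hF]
      rw [Finset.sum_add_distrib, ← map_sum, ← hf₀sum, hsum_biUnion (fun i => c i • uvec d i)]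
    rw [this]
    funext p
    show x p = iot y p + (∑ i, c i • uvec d i) p
    rw [Finset.sum_apply]
    rcases idx_cases p with ⟨l, rfl⟩ | ⟨i', rfl⟩ | rfl
    · rw [iot_app1]
      have : ∀ i ∈ Finset.univ, (c i • uvec d i) (idx1 l) = 0 := by
        intro i _
        show c i * uvec d i (idx1 l) = 0
        rw [show uvec d i (idx1 l) = (0 : Pt d) l from gen_app1 i 0 l]
        simp
      rw [Finset.sum_congr rfl this, Finset.sum_const_zero, add_zero]
      rfl
    · rw [iot_app2, zero_add]
      rw [Finset.sum_eq_single_of_mem i'.castSucc (Finset.mem_univ _)]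
      · show x (idx2 i') = c i'.castSucc * uvec d i'.castSucc (idx2 i')
        rw [show uvec d i'.castSucc (idx2 i') = _ from gen_app2 _ 0 i',
          if_pos (Fin.coe_castSucc i').symm, mul_one, hc2]
      · intro b _ hb
        show c b * uvec d b (idx2 i') = 0
        rw [show uvec d b (idx2 i') = _ from gen_app2 b 0 i',
          if_neg (fun hvaleq => hb (Fin.ext hvaleq.symm)), mul_zero]
    · rw [iot_apph, zero_add]
      rw [Finset.sum_congr rfl (fun i _ => by
        show c i * uvec d i (idxh d m) = c i
        rw [show uvec d i (idxh d m) = 1 from gen_apph i 0, mul_one])]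
      exact hcsum.symm
  refine ⟨F, ⟨fun j => ⟨hFlatt j, hFmem j⟩, hFsum⟩, ?_⟩
  -- uniqueness
  rintro G ⟨hGprop, hGsum⟩
  have hcond : ∀ j, G j ∈ Wcond Q (I j) := fun j => W_le_Wcond Q (I j) h0 (hGprop j).2
  have hGf₀ : (fun j => pi1 (G j)) = f₀ := by
    apply huniq
    constructor
    · intro j
      exact ⟨pi1_latt (hGprop j).1, (hcond j).1⟩
    · rw [hy, hGsum, map_sum]
  have hGcoord2 : ∀ j (i' : Fin m), G j (idx2 i') =
      if i'.castSucc ∈ I j then x (idx2 i') else 0 := by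
    intro j i'
    by_cases hmemJ : i'.castSucc ∈ I j
    · rw [if_pos hmemJ]
      have hx2 : x (idx2 i') = ∑ j', G j' (idx2 i') := by
        rw [hGsum]; rw [Finset.sum_apply]
      rw [hx2, Finset.sum_eq_single_of_mem j (Finset.mem_univ _)]
      intro j' _ hj'
      exact (hcond j').2.1 i' (fun hmem' => (Finset.disjoint_left.1 (hdisj j' j hj') hmem') hmemJ)
    · rw [if_neg hmemJ]
      exact (hcond j).2.1 i' hmemJ
  -- agreement away from the last index
  have hGagree : ∀ j, Fin.last m ∉ I j → G j = F j := by
    intro j hlast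
    funext p
    rcases idx_cases p with ⟨l, rfl⟩ | ⟨i', rfl⟩ | rfl
    · rw [Fcoord1, ← hGf₀]
      rfl
    · rw [Fcoord2, hGcoord2]
      by_cases hmemJ : i'.castSucc ∈ I j
      · rw [if_pos hmemJ, if_pos hmemJ, hc2]
      · rw [if_neg hmemJ, if_neg hmemJ]
    · rw [Fcoordh, (hcond j).2.2 hlast]
      have himg : (Finset.univ.filter (fun i' : Fin m => i'.castSucc ∈ I j)).image
          Fin.castSucc = I j := by
        ext i
        simp only [Finset.mem_image, Finset.mem_filter, Finset.mem_univ, true_and]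
        constructor
        · rintro ⟨i', hi', rfl⟩; exact hi'
        · intro hi
          have hvm : (i : ℕ) < m := Fin.val_lt_last (fun h => hlast (h ▸ hi))
          refine ⟨⟨(i : ℕ), hvm⟩, ?_, Fin.ext rfl⟩
          rwa [show (⟨(i : ℕ), hvm⟩ : Fin m).castSucc = i from Fin.ext rfl]
      conv_rhs => rw [← himg]
      rw [Finset.sum_image (fun a _ b _ h => Fin.castSucc_injective m h)]
      apply Finset.sum_congr rfl
      intro i' hi'
      rw [hGcoord2, if_pos (Finset.mem_filter.1 hi').2]
      exact (hc2 i').symm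
  -- the block containing the last index
  obtain ⟨j₀, hj₀⟩ := hmem (Fin.last m)
  funext j
  by_cases hj : j = j₀
  · rw [hj]
    have h1 : G j₀ + ∑ j' ∈ Finset.univ.erase j₀, G j' = ∑ j', G j' :=
      Finset.add_sum_erase _ G (Finset.mem_univ _)
    have h2 : F j₀ + ∑ j' ∈ Finset.univ.erase j₀, F j' = ∑ j', F j' :=
      Finset.add_sum_erase _ F (Finset.mem_univ _)
    have h3 : ∑ j' ∈ Finset.univ.erase j₀, G j' = ∑ j' ∈ Finset.univ.erase j₀, F j' := by
      apply Finset.sum_congr rfl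
      intro j' hj'
      have hne : j' ≠ j₀ := (Finset.mem_erase.1 hj').1
      exact hGagree j' (fun hmem' => (Finset.disjoint_left.1 (hdisj j' j₀ hne) hmem') hj₀)
    have h4 : ∑ j', G j' = ∑ j', F j' := hGsum.symm.trans hFsum
    have := h1.trans (h4.trans h2.symm)
    rw [h3] at this
    exact add_right_cancel this
  · have hlast : Fin.last m ∉ I j :=
      fun hmem' => (Finset.disjoint_left.1 (hdisj j j₀ hj) hmem') hj₀
    exact hGagree j hlast

end Decomp


section Decomp2

variable {d m k : ℕ}

lemma backward_decomp (Q : Fin (m + 1) → Set (Pt d)) (I : Fin k → Finset (Fin (m + 1)))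
    (h0 : ∀ i, (0 : Pt d) ∈ Q i)
    (hmu : ∀ x : Pt (d + m + 1), isLatticePt x → ∃! F : Fin k → Pt (d + m + 1),
      (∀ j, isLatticePt (F j) ∧ F j ∈ Wspan (subCayley Q (I j))) ∧ x = ∑ j, F j)
    (y : Pt d) (hy : isLatticePt y) :
    ∃! f : Fin k → Pt d,
      (∀ j, isLatticePt (f j) ∧
        f j ∈ Submodule.span ℝ ((∑ i ∈ I j, Q i : Set (Pt d)))) ∧ y = ∑ j, f j := by
  classical
  obtain ⟨F, ⟨hFprop, hFsum⟩, hFuniq⟩ := hmu (iot y) (iot_latt hy)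
  have lift_sol : ∀ f : Fin k → Pt d,
      ((∀ j, isLatticePt (f j) ∧
        f j ∈ Submodule.span ℝ ((∑ i ∈ I j, Q i : Set (Pt d)))) ∧ y = ∑ j, f j) →
      (fun j => iot (f j)) = F := by
    intro f ⟨hfprop, hfsum⟩
    apply hFuniq
    constructor
    · intro j
      exact ⟨iot_latt (hfprop j).1, iot_mem_W Q (I j) h0 (hfprop j).2⟩
    · rw [← map_sum, ← hfsum]
  refine ⟨fun j => pi1 (F j), ⟨?_, ?_⟩, ?_⟩
  · intro j
    exact ⟨pi1_latt (hFprop j).1, (W_le_Wcond Q (I j) h0 (hFprop j).2).1⟩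
  · have : pi1 (m := m) (iot y) = pi1 (∑ j, F j) := by rw [← hFsum]
    rw [pi1_iot, map_sum] at this
    exact this
  · intro g hg
    have h1 : (fun j => iot (g j)) = F := lift_sol g hg
    funext j
    apply iot_inj (m := m)
    rw [show iot (g j) = F j from congrFun h1 j]
    -- now show F j = iot (pi1 (F j)), i.e. iot (pi1 (F j)) = F j reversed
    have h2 : (fun j => iot (pi1 (F j))) = F := by
      apply lift_sol
      refine ⟨?_, ?_⟩
      · intro j'
        exact ⟨pi1_latt (hFprop j').1, (W_le_Wcond Q (I j') h0 (hFprop j').2).1⟩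
      · have : pi1 (m := m) (iot y) = pi1 (∑ j', F j') := by rw [← hFsum]
        rw [pi1_iot, map_sum] at this
        exact this
    exact (congrFun h2 j).symm

end Decomp2


section Faces

variable {d m : ℕ}

lemma exposed_of_gap {N : ℕ} (GJ GR : Set (Pt N)) (hJne : GJ.Nonempty)
    (l : Pt N →L[ℝ] ℝ) (c : ℝ) (hcJ : ∀ p ∈ GJ, l p = c) (hcR : ∀ p ∈ GR, l p = c - 1) :
    IsExposed ℝ (convexHull ℝ (GJ ∪ GR)) (convexHull ℝ GJ) := by
  intro _
  refine ⟨l, ?_⟩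
  have hlin : IsLinearMap ℝ (fun w => l w) := ⟨map_add l, map_smul l⟩
  have hBA : convexHull ℝ GJ ⊆ convexHull ℝ (GJ ∪ GR) := convexHull_mono Set.subset_union_left
  have hlJ : ∀ x ∈ convexHull ℝ GJ, l x = c := fun x hx =>
    convexHull_min (fun p hp => hcJ p hp) (convex_hyperplane hlin c) hx
  have hlR : ∀ x ∈ convexHull ℝ GR, l x = c - 1 := fun x hx =>
    convexHull_min (fun p hp => hcR p hp) (convex_hyperplane hlin (c - 1)) hx
  have hlA : ∀ x ∈ convexHull ℝ (GJ ∪ GR), l x ≤ c := fun x hx =>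
    convexHull_min (fun p hp => by
      show l p ≤ c
      rcases hp with hp | hp
      · exact (hcJ p hp).le
      · rw [hcR p hp]; linarith) (convex_halfSpace_le hlin c) hx
  obtain ⟨a₀, ha₀⟩ := hJne
  ext x
  constructor
  · intro hx
    exact ⟨hBA hx, fun y hy => (hlA y hy).trans_eq (hlJ x hx).symm⟩
  · rintro ⟨hxA, hmax⟩
    have hlx : l x = c := by
      have h1 : l x ≤ c := hlA x hxA
      have h2 : c ≤ l x := by
        have := hmax a₀ (hBA (subset_convexHull ℝ GJ ha₀))
        rwa [hcJ a₀ ha₀] at this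
      linarith
    by_cases hR : GR = ∅
    · rw [hR, Set.union_empty] at hxA
      exact hxA
    · have hRne : GR.Nonempty := Set.nonempty_iff_ne_empty.2 hR
      rw [convexHull_union ⟨a₀, ha₀⟩ hRne] at hxA
      rw [mem_convexJoin] at hxA
      obtain ⟨a, ha, b, hb, hseg⟩ := hxA
      obtain ⟨ua, ub, hua, hub, huab, rfl⟩ := hseg
      have hval : l (ua • a + ub • b) = c - ub := by
        rw [map_add, map_smul, map_smul, hlJ a ha, hlR b hb]
        simp only [smul_eq_mul]
        have : ua = 1 - ub := by linarith
        rw [this]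
        ring
      have hub0 : ub = 0 := by
        rw [hval] at hlx
        linarith
      have hua1 : ua = 1 := by linarith
      rw [hub0, hua1, one_smul, zero_smul, add_zero]
      exact ha

/-- The middle-block index in `Pt (d + m)`. -/
def jdx2 {d m : ℕ} (i' : Fin m) : Fin (d + m) := ⟨d + i', by omega⟩

lemma cayleyEmb_app2 (i : Fin (m + 1)) (x : Pt d) (i' : Fin m) :
    cayleyEmb (r := m + 1) i x (jdx2 i') = if (i' : ℕ) = (i : ℕ) then 1 else 0 := by
  show Fin.append x (unitVec (m + 1) i) (jdx2 i') = _
  have : ((jdx2 i' : Fin (d + m)) : ℕ) = d + (i' : ℕ) := rfl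
  rw [append_apply]
  rw [dif_neg (show ¬ ((jdx2 i' : Fin (d + m)) : ℕ) < d from by rw [this]; omega)]
  show unitVec (m + 1) i ⟨d + (i' : ℕ) - d, _⟩ = _
  unfold unitVec
  congr 1
  simp

/-- Sum of middle coordinates of a Cayley generator over an index set. -/
lemma sum_emb_coords (S : Finset (Fin m)) (i : Fin (m + 1)) (x : Pt d) :
    ∑ i' ∈ S, cayleyEmb (r := m + 1) i x (jdx2 i') =
      if h : (i : ℕ) < m then (if ⟨(i : ℕ), h⟩ ∈ S then (1 : ℝ) else 0) else 0 := by
  classical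
  rw [Finset.sum_congr rfl fun i' _ => cayleyEmb_app2 i x i']
  by_cases h : (i : ℕ) < m
  · rw [dif_pos h]
    by_cases hmemS : (⟨(i : ℕ), h⟩ : Fin m) ∈ S
    · rw [if_pos hmemS, Finset.sum_eq_single_of_mem (⟨(i : ℕ), h⟩ : Fin m) hmemS]
      · rw [if_pos rfl]
      · intro b _ hb
        rw [if_neg (fun hv => hb (Fin.ext hv))]
    · rw [if_neg hmemS]
      apply Finset.sum_eq_zero
      intro i' hi'
      rw [if_neg (fun hv => hmemS ((Fin.ext hv : i' = ⟨(i : ℕ), h⟩) ▸ hi'))]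
  · rw [dif_neg h]
    apply Finset.sum_eq_zero
    intro i' _
    rw [if_neg]
    intro hv
    exact h (hv ▸ i'.isLt)

/-- The linear functional summing a set of middle coordinates. -/
def lfun (d : ℕ) {m : ℕ} (S : Finset (Fin m)) : Pt (d + m) →ₗ[ℝ] ℝ where
  toFun v := ∑ i' ∈ S, v (jdx2 i')
  map_add' a b := by simp [Finset.sum_add_distrib]
  map_smul' r a := by simp [Finset.mul_sum]

lemma subCayley_isFace (Q : Fin (m + 1) → Set (Pt d)) (J : Finset (Fin (m + 1)))
    (hQne : ∀ i, (Q i).Nonempty) (hJne : J.Nonempty) :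
    IsFaceOf (subCayley Q J) (cayleyFam Q) := by
  classical
  set GJ : Set (Pt (d + m)) := ⋃ i ∈ J, cayleyEmb (r := m + 1) i '' Q i with hGJ
  set GR : Set (Pt (d + m)) := ⋃ i ∈ Jᶜ, cayleyEmb (r := m + 1) i '' Q i with hGR
  have hunion : GJ ∪ GR = ⋃ i, cayleyEmb (r := m + 1) i '' Q i := by
    ext p
    simp only [hGJ, hGR, Set.mem_union, Set.mem_iUnion, Finset.mem_compl]
    constructor
    · rintro (⟨i, _, hp⟩ | ⟨i, _, hp⟩) <;> exact ⟨i, hp⟩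
    · rintro ⟨i, hp⟩
      by_cases hi : i ∈ J
      · exact Or.inl ⟨i, hi, hp⟩
      · exact Or.inr ⟨i, hi, hp⟩
  have hGJne : GJ.Nonempty := by
    obtain ⟨i, hi⟩ := hJne
    obtain ⟨x, hx⟩ := hQne i
    exact ⟨cayleyEmb i x, Set.mem_iUnion₂.2 ⟨i, hi, ⟨x, hx, rfl⟩⟩⟩
  have hmain : ∀ (l : Pt (d + m) →L[ℝ] ℝ) (c : ℝ), (∀ p ∈ GJ, l p = c) →
      (∀ p ∈ GR, l p = c - 1) → IsFaceOf (subCayley Q J) (cayleyFam Q) := by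
    intro l c hcJ hcR
    have := exposed_of_gap GJ GR hGJne l c hcJ hcR
    rw [hunion] at this
    exact this
  by_cases hlast : Fin.last m ∈ J
  · -- use minus the sum of coordinates outside J
    set S : Finset (Fin m) := Finset.univ.filter (fun i' : Fin m => i'.castSucc ∉ J) with hS
    refine hmain (-(LinearMap.toContinuousLinearMap (lfun d S))) 0 ?_ ?_
    · rintro p hp
      obtain ⟨i, hi, hp2⟩ := Set.mem_iUnion₂.1 hp
      obtain ⟨x, hx, rfl⟩ := hp2
      show -(∑ i' ∈ S, cayleyEmb i x (jdx2 i')) = 0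
      rw [sum_emb_coords]
      by_cases h : (i : ℕ) < m
      · rw [dif_pos h, if_neg, neg_zero]
        rw [hS, Finset.mem_filter]
        push_neg
        intro _
        rw [show (⟨(i : ℕ), h⟩ : Fin m).castSucc = i from Fin.ext rfl]
        exact hi
      · rw [dif_neg h, neg_zero]
    · rintro p hp
      obtain ⟨i, hi, hp2⟩ := Set.mem_iUnion₂.1 hp
      obtain ⟨x, hx, rfl⟩ := hp2
      have hiJ : i ∉ J := Finset.mem_compl.1 hi
      have hne : i ≠ Fin.last m := fun h => hiJ (h ▸ hlast)
      have h : (i : ℕ) < m := Fin.val_lt_last hne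
      show -(∑ i' ∈ S, cayleyEmb i x (jdx2 i')) = 0 - 1
      rw [sum_emb_coords, dif_pos h, if_pos, ]
      · ring
      · rw [hS, Finset.mem_filter]
        refine ⟨Finset.mem_univ _, ?_⟩
        rw [show (⟨(i : ℕ), h⟩ : Fin m).castSucc = i from Fin.ext rfl]
        exact hiJ
  · -- use the sum of coordinates inside J
    set S : Finset (Fin m) := Finset.univ.filter (fun i' : Fin m => i'.castSucc ∈ J) with hS
    refine hmain (LinearMap.toContinuousLinearMap (lfun d S)) 1 ?_ ?_
    · rintro p hp
      obtain ⟨i, hi, hp2⟩ := Set.mem_iUnion₂.1 hp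
      obtain ⟨x, hx, rfl⟩ := hp2
      have hne : i ≠ Fin.last m := fun h => hlast (h ▸ hi)
      have h : (i : ℕ) < m := Fin.val_lt_last hne
      show (∑ i' ∈ S, cayleyEmb i x (jdx2 i')) = 1
      rw [sum_emb_coords, dif_pos h, if_pos]
      rw [hS, Finset.mem_filter]
      refine ⟨Finset.mem_univ _, ?_⟩
      rw [show (⟨(i : ℕ), h⟩ : Fin m).castSucc = i from Fin.ext rfl]
      exact hi
    · rintro p hp
      obtain ⟨i, hi, hp2⟩ := Set.mem_iUnion₂.1 hp
      obtain ⟨x, hx, rfl⟩ := hp2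
      have hiJ : i ∉ J := Finset.mem_compl.1 hi
      show (∑ i' ∈ S, cayleyEmb i x (jdx2 i')) = 1 - 1
      rw [sum_emb_coords]
      by_cases h : (i : ℕ) < m
      · rw [dif_pos h, if_neg]
        · ring
        · rw [hS, Finset.mem_filter]
          push_neg
          intro _
          rw [show (⟨(i : ℕ), h⟩ : Fin m).castSucc = i from Fin.ext rfl]
          exact hiJ
      · rw [dif_neg h]; ring

lemma cayley_hull {k : ℕ} (Q : Fin (m + 1) → Set (Pt d)) (I : Fin k → Finset (Fin (m + 1)))
    (hcover : Finset.univ.biUnion I = Finset.univ) :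
    cayleyFam Q = convexHull ℝ (⋃ j, subCayley Q (I j)) := by
  apply le_antisymm
  · apply convexHull_mono
    intro p hp
    obtain ⟨i, hp2⟩ := Set.mem_iUnion.1 hp
    have : i ∈ Finset.univ.biUnion I := by rw [hcover]; exact Finset.mem_univ i
    obtain ⟨j, _, hij⟩ := Finset.mem_biUnion.1 this
    apply Set.mem_iUnion.2 ⟨j, ?_⟩
    apply subset_convexHull
    exact Set.mem_iUnion₂.2 ⟨i, hij, hp2⟩
  · apply convexHull_min ?_ (convex_convexHull ℝ _)
    apply Set.iUnion_subset
    intro j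
    apply convexHull_mono
    apply Set.iUnion₂_subset
    intro i _
    exact Set.subset_iUnion (fun i => cayleyEmb (r := m + 1) i '' Q i) i

end Faces


section DotAlg

variable {d : ℕ}

lemma dot_add_left (a b c : Pt d) : dot (a + b) c = dot a c + dot b c := by
  unfold dot
  rw [← Finset.sum_add_distrib]
  exact Finset.sum_congr rfl fun i _ => by show (a i + b i) * c i = _; ring

lemma dot_smul_left (r : ℝ) (a c : Pt d) : dot (r • a) c = r * dot a c := by
  unfold dot
  rw [Finset.mul_sum]
  exact Finset.sum_congr rfl fun i _ => by show (r * a i) * c i = _; ring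

lemma dot_sub_left (a b c : Pt d) : dot (a - b) c = dot a c - dot b c := by
  unfold dot
  rw [← Finset.sum_sub_distrib]
  exact Finset.sum_congr rfl fun i _ => by show (a i - b i) * c i = _; ring

lemma dot_sum_right {ι : Type*} (s : Finset ι) (w : Pt d) (f : ι → Pt d) :
    dot w (∑ i ∈ s, f i) = ∑ i ∈ s, dot w (f i) := by
  classical
  induction s using Finset.induction_on with
  | empty => simp [dot]
  | insert _ _ hx ih =>
    rw [Finset.sum_insert hx, Finset.sum_insert hx, ← ih, dot_comm w, dot_add_left]
    rw [dot_comm (f _) w]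
    rw [dot_comm _ w]

lemma dot_smul_right (r : ℝ) (a c : Pt d) : dot a (r • c) = r * dot a c := by
  rw [dot_comm, dot_smul_left, dot_comm]

lemma dot_latt {x y : Pt d} (hx : isLatticePt x) (hy : isLatticePt y) :
    ∃ kk : ℤ, dot x y = (kk : ℝ) := by
  apply exIntSum
  intro i _
  obtain ⟨a, ha⟩ := hx i
  obtain ⟨b, hb⟩ := hy i
  exact ⟨a * b, by rw [ha, hb]; push_cast; ring⟩

lemma sum_sbv (x : Pt d) : ∑ a, x a • sbv a = x := by
  funext q
  rw [Finset.sum_apply]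
  rw [Finset.sum_eq_single q]
  · show x q • (if q = q then (1 : ℝ) else 0) = x q
    rw [if_pos rfl, smul_eq_mul, mul_one]
  · intro b _ hb
    show x b • (if b = q then (1 : ℝ) else 0) = 0
    rw [if_neg hb, smul_eq_mul, mul_zero]
  · intro h
    exact absurd (Finset.mem_univ q) h

/-- Transpose of a linear endomorphism with respect to the dot product. -/
def transp (A : Pt d →ₗ[ℝ] Pt d) : Pt d →ₗ[ℝ] Pt d where
  toFun w := fun a => dot w (A (sbv a))
  map_add' u v := by funext a; show dot (u + v) _ = dot u _ + dot v _; rw [dot_add_left]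
  map_smul' r u := by
    funext a
    show dot (r • u) _ = r * dot u _
    rw [dot_smul_left]

lemma dot_transp (A : Pt d →ₗ[ℝ] Pt d) (w x : Pt d) : dot (transp A w) x = dot w (A x) := by
  have hx : A x = ∑ a, x a • A (sbv a) := by
    conv_lhs => rw [← sum_sbv x]
    rw [map_sum]
    exact Finset.sum_congr rfl fun a _ => by rw [map_smul]
  rw [hx, dot_sum_right]
  rw [Finset.sum_congr rfl fun a (_ : a ∈ Finset.univ) => dot_smul_right (x a) w (A (sbv a))]
  show ∑ a, dot w (A (sbv a)) * x a = ∑ a, x a * dot w (A (sbv a))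
  exact Finset.sum_congr rfl fun a _ => mul_comm _ _

/-- Decomposition projections from a unique-lattice-decomposition property. -/
lemma proj_exists {d k : ℕ} (U : Fin k → Submodule ℝ (Pt d))
    (hdec : ∀ w : Pt d, isLatticePt w → ∃! f : Fin k → Pt d,
      (∀ j, isLatticePt (f j) ∧ f j ∈ U j) ∧ w = ∑ j, f j)
    (hTs : ∀ j, ∃ T : Set (Pt d), (∀ t ∈ T, isLatticePt t) ∧ Submodule.span ℝ T = U j) :
    ∃ L : Fin k → (Pt d →ₗ[ℝ] Pt d),
      (∀ j v, L j v ∈ U j) ∧ (∀ v, ∑ j, L j v = v) ∧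
      (∀ j j' : Fin k, ∀ v ∈ U j', L j v = if j = j' then v else 0) := by
  classical
  set bdec : Fin d → Fin k → Pt d := fun l => (hdec (sbv l) (latt_sbv l)).choose with hbdec
  have hbspec : ∀ l : Fin d,
      ((∀ j, isLatticePt (bdec l j) ∧ bdec l j ∈ U j) ∧ sbv l = ∑ j, bdec l j) :=
    fun l => (hdec (sbv l) (latt_sbv l)).choose_spec.1
  have hbuniq : ∀ l : Fin d, ∀ g : Fin k → Pt d,
      ((∀ j, isLatticePt (g j) ∧ g j ∈ U j) ∧ sbv l = ∑ j, g j) → g = bdec l :=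
    fun l => (hdec (sbv l) (latt_sbv l)).choose_spec.2
  set L : Fin k → (Pt d →ₗ[ℝ] Pt d) := fun j =>
    { toFun := fun v => ∑ l, v l • bdec l j
      map_add' := fun u v => by
        rw [← Finset.sum_add_distrib]
        exact Finset.sum_congr rfl fun l _ => by
          show (u l + v l) • _ = _
          rw [add_smul]
      map_smul' := fun r u => by
        show ∑ l, (r * u l) • bdec l j = r • ∑ l, u l • bdec l j
        rw [Finset.smul_sum]
        exact Finset.sum_congr rfl fun l _ => by rw [mul_smul] } with hL
  have hLapp : ∀ j v, L j v = ∑ l, v l • bdec l j := fun j v => rfl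
  have hmem : ∀ j v, L j v ∈ U j := by
    intro j v
    rw [hLapp]
    exact Submodule.sum_mem _ fun l _ => Submodule.smul_mem _ _ ((hbspec l).1 j).2
  have hsum : ∀ v, ∑ j, L j v = v := by
    intro v
    rw [Finset.sum_congr rfl fun j _ => hLapp j v, Finset.sum_comm]
    rw [Finset.sum_congr rfl fun l (_ : l ∈ Finset.univ) => (Finset.smul_sum).symm]
    rw [Finset.sum_congr rfl fun l (_ : l ∈ Finset.univ) => by
      rw [← ((hbspec l).2 : sbv l = ∑ j, bdec l j)]]
    exact sum_sbv v
  have hlatt_delta : ∀ (j' : Fin k) (w : Pt d), isLatticePt w → w ∈ U j' →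
      ∀ j, L j w = if j = j' then w else 0 := by
    intro j' w hwlatt hwmem j
    -- the coordinate combination is the unique decomposition of w
    have hcomb : (fun j => ∑ l, w l • bdec l j) = fun j => if j = j' then w else 0 := by
      have h1 : ((∀ j, isLatticePt (∑ l, w l • bdec l j) ∧ (∑ l, w l • bdec l j) ∈ U j) ∧
          w = ∑ j, ∑ l, w l • bdec l j) := by
        constructor
        · intro j
          constructor
          · exact latt_sum _ _ fun l _ => latt_smul (hwlatt l) ((hbspec l).1 j).1
          · exact Submodule.sum_mem _ fun l _ => Submodule.smul_mem _ _ ((hbspec l).1 j).2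
        · rw [Finset.sum_comm]
          conv_lhs => rw [← sum_sbv w]
          refine Finset.sum_congr rfl fun l _ => ?_
          rw [((hbspec l).2 : sbv l = ∑ j, bdec l j), Finset.smul_sum]
      have h2 : ((∀ j, isLatticePt (if j = j' then w else 0) ∧
          (if j = j' then w else 0) ∈ U j) ∧ w = ∑ j, if j = j' then w else 0) := by
        constructor
        · intro j
          by_cases h : j = j'
          · rw [if_pos h, h]
            exact ⟨hwlatt, hwmem⟩
          · rw [if_neg h]
            exact ⟨latt_zero, Submodule.zero_mem _⟩
        · rw [Finset.sum_ite_eq' Finset.univ j' (fun _ => w), if_pos (Finset.mem_univ _)]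
      obtain ⟨fdec, _, hfuniq⟩ := hdec w hwlatt
      rw [hfuniq _ h1, hfuniq _ h2]
    have := congrFun hcomb j
    rw [hLapp]
    exact this
  refine ⟨L, hmem, hsum, ?_⟩
  intro j j' v hv
  obtain ⟨T, hTlatt, hTspan⟩ := hTs j'
  have hTsub : T ⊆ (U j' : Set (Pt d)) := hTspan ▸ Submodule.subset_span
  -- prove by span induction over T
  have key : ∀ v ∈ Submodule.span ℝ T, L j v = if j = j' then v else 0 := by
    intro v hvspan
    induction hvspan using Submodule.span_induction with
    | mem t ht => exact hlatt_delta j' t (hTlatt t ht) (hTsub ht) j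
    | zero => rw [map_zero]; by_cases h : j = j' <;> simp [h]
    | add a b _ _ iha ihb =>
      rw [map_add, iha, ihb]
      by_cases h : j = j' <;> simp [h]
    | smul r a _ iha =>
      rw [map_smul, iha]
      by_cases h : j = j' <;> simp [h]
  exact key v (hTspan ▸ hv)

end DotAlg


section OProj

variable {d : ℕ}

/-- Identification of `Pt d` with Euclidean space. -/
def euc (d : ℕ) : Pt d ≃ₗ[ℝ] EuclideanSpace ℝ (Fin d) :=
  (WithLp.linearEquiv 2 ℝ (Fin d → ℝ)).symm

lemma dot_eq_inner (a b : Pt d) : dot a b = inner ℝ (euc d a) (euc d b) := by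
  rw [PiLp.inner_apply]
  unfold dot
  exact Finset.sum_congr rfl fun i _ => by
    change a i * b i = inner ℝ (a i) (b i); simp [mul_comm]

/-- Orthogonal projection onto a subspace of `Pt d`, as a linear endomorphism. -/
def oprojL (U : Submodule ℝ (Pt d)) : Pt d →ₗ[ℝ] Pt d :=
  (euc d).symm.toLinearMap ∘ₗ
    ((Submodule.map (euc d).toLinearMap U).subtype ∘ₗ
      (Submodule.orthogonalProjectionOnto (Submodule.map (euc d).toLinearMap U)).toLinearMap) ∘ₗ
    (euc d).toLinearMap

lemma oprojL_mem (U : Submodule ℝ (Pt d)) (x : Pt d) : oprojL U x ∈ U := by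
  have h2 : oprojL U x = (euc d).symm
      ((Submodule.orthogonalProjectionOnto (Submodule.map (euc d).toLinearMap U) ((euc d) x) :
        EuclideanSpace ℝ (Fin d))) := rfl
  rw [h2]
  obtain ⟨u, hu, heq⟩ := Submodule.mem_map.1
    (Submodule.orthogonalProjectionOnto (Submodule.map (euc d).toLinearMap U) ((euc d) x)).2
  rw [← heq]
  have h3 : (euc d).symm ((euc d).toLinearMap u) = u := (euc d).symm_apply_apply u
  rw [h3]
  exact hu

lemma oprojL_dot (U : Submodule ℝ (Pt d)) (x : Pt d) {s : Pt d} (hs : s ∈ U) :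
    dot (x - oprojL U x) s = 0 := by
  set K := Submodule.map (euc d).toLinearMap U with hK
  have hperp : euc d x - (Submodule.orthogonalProjectionOnto K (euc d x) : EuclideanSpace ℝ (Fin d)) ∈ Kᗮ :=
    Submodule.sub_starProjection_mem_orthogonal (K := K) _
  have heq : euc d (x - oprojL U x) =
      euc d x - (Submodule.orthogonalProjectionOnto K (euc d x) : EuclideanSpace ℝ (Fin d)) := by
    rw [map_sub]
    congr 1
  have hsK : euc d s ∈ K := Submodule.mem_map_of_mem hs
  rw [dot_eq_inner, heq]
  rw [real_inner_comm]
  exact (Submodule.mem_orthogonal K _).1 hperp _ hsK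

end OProj


section Reflexive

variable {d m k : ℕ}

/-- The span of a Minkowski sum of a subfamily. -/
def UJ (Q : Fin (m + 1) → Set (Pt d)) (J : Finset (Fin (m + 1))) : Submodule ℝ (Pt d) :=
  Submodule.span ℝ (SJ Q J)

lemma SJ_latpoly (Q : Fin (m + 1) → Set (Pt d)) (J : Finset (Fin (m + 1)))
    (hQlat : ∀ i, IsLat (stdL d) (Q i)) :
    ∃ V : Finset (Pt d), (∀ v ∈ V, isLatticePt v) ∧
      SJ Q J = convexHull ℝ (V : Set (Pt d)) := by
  classical
  choose V hVsub hVconv using hQlat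
  refine ⟨∑ i ∈ J, V i, ?_, ?_⟩
  · intro v hv
    have hv' : (v : Pt d) ∈ (↑(∑ i ∈ J, V i) : Set (Pt d)) := hv
    rw [Finset.coe_sum, Set.mem_finset_sum] at hv'
    obtain ⟨g, hg, hsum⟩ := hv'
    rw [← hsum]
    exact latt_sum _ _ fun i hi => (hVsub i) (hg hi)
  · show (∑ i ∈ J, Q i : Set (Pt d)) = _
    rw [Finset.sum_congr rfl fun i _ => hVconv i, ← convexHull_sum, Finset.coe_sum]

lemma backward_reflexive (Q : Fin (m + 1) → Set (Pt d)) (I : Fin k → Finset (Fin (m + 1)))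
    (hQlat : ∀ i, IsLat (stdL d) (Q i)) (h0 : ∀ i, (0 : Pt d) ∈ Q i)
    (hdisj : ∀ j j', j ≠ j' → Disjoint (I j) (I j'))
    (hcover : Finset.univ.biUnion I = Finset.univ)
    (hPrefl : IsReflexiveL (stdL d) (∑ i, Q i))
    (hPdim : dimP (∑ i, Q i : Set (Pt d)) = (d : ℤ))
    (hsp : ∀ x : Pt d, isLatticePt x → ∃! f : Fin k → Pt d,
      (∀ j, isLatticePt (f j) ∧
        f j ∈ Submodule.span ℝ ((∑ i ∈ I j, Q i : Set (Pt d)))) ∧ x = ∑ j, f j)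
    (j : Fin k) : IsReflexiveL (stdL d) (∑ i ∈ I j, Q i) := by
  classical
  have h0S : ∀ j', (0 : Pt d) ∈ SJ Q (I j') := fun j' => zero_mem_SJ Q (I j') h0
  have h0P : (0 : Pt d) ∈ (∑ i, Q i : Set (Pt d)) := zero_mem_SJ Q Finset.univ h0
  have hPsum : (∑ i, Q i : Set (Pt d)) = ∑ j', SJ Q (I j') := by
    show (∑ i ∈ Finset.univ, Q i : Set (Pt d)) = _
    rw [← hcover, Finset.sum_biUnion (fun j' _ j'' _ hne => hdisj j' j'' hne)]
    rfl
  have hSP : ∀ j', SJ Q (I j') ⊆ (∑ i, Q i : Set (Pt d)) := by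
    intro j' x hx
    rw [hPsum, Set.mem_fintype_sum]
    refine ⟨fun j'' => if j'' = j' then x else 0, fun j'' => ?_, ?_⟩
    · show (if j'' = j' then x else 0) ∈ SJ Q (I j'')
      by_cases h : j'' = j'
      · rw [if_pos h, h]; exact hx
      · rw [if_neg h]; exact h0S j''
    · rw [Finset.sum_ite_eq' Finset.univ j' (fun _ => x), if_pos (Finset.mem_univ _)]
  obtain ⟨Vj, hVlat, hVconv⟩ := SJ_latpoly Q (I j) hQlat
  have hVsubS : (Vj : Set (Pt d)) ⊆ SJ Q (I j) := hVconv ▸ subset_convexHull ℝ _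
  have hTs : ∀ j', ∃ T : Set (Pt d), (∀ t ∈ T, isLatticePt t) ∧
      Submodule.span ℝ T = UJ Q (I j') := by
    intro j'
    obtain ⟨V', hVlat', hVconv'⟩ := SJ_latpoly Q (I j') hQlat
    refine ⟨↑V', hVlat', ?_⟩
    show Submodule.span ℝ ↑V' = Submodule.span ℝ (SJ Q (I j'))
    rw [hVconv', span_convexHull]
  obtain ⟨L, hLmem, hLsum, hLdelta⟩ := proj_exists (fun j' => UJ Q (I j')) hsp hTs
  have hLfix : ∀ x ∈ UJ Q (I j), L j x = x := by
    intro x hx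
    have := hLdelta j j x hx
    rwa [if_pos rfl] at this
  have hLPmem : ∀ x ∈ (∑ i, Q i : Set (Pt d)), L j x ∈ SJ Q (I j) := by
    intro x hx
    rw [hPsum, Set.mem_fintype_sum] at hx
    obtain ⟨g, hg, hsum⟩ := hx
    have hgx : L j x = g j := by
      rw [← hsum, map_sum]
      rw [Finset.sum_congr rfl fun j' (_ : j' ∈ Finset.univ) =>
        hLdelta j j' (g j') (Submodule.subset_span (hg j'))]
      rw [Finset.sum_ite_eq Finset.univ j (fun j' => g j'), if_pos (Finset.mem_univ _)]
    rw [hgx]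
    exact hg j
  -- the affine span of P is everything
  have hPne : (∑ i, Q i : Set (Pt d)).Nonempty := ⟨0, h0P⟩
  have haff_top : affineSpan ℝ (∑ i, Q i : Set (Pt d)) = ⊤ := by
    have hPdim' : Module.finrank ℝ (affineSpan ℝ (∑ i, Q i : Set (Pt d))).direction = d := by
      unfold dimP at hPdim
      rw [if_neg (Set.nonempty_iff_ne_empty.1 hPne)] at hPdim
      exact_mod_cast hPdim
    have hdir : (affineSpan ℝ (∑ i, Q i : Set (Pt d))).direction = ⊤ :=
      Submodule.eq_top_of_finrank_eq
        (by rw [hPdim', Module.finrank_pi, Fintype.card_fin])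
    have h0aff : (0 : Pt d) ∈ affineSpan ℝ (∑ i, Q i : Set (Pt d)) := mem_affineSpan ℝ h0P
    apply le_antisymm le_top
    intro z _
    have hz : z - 0 ∈ (affineSpan ℝ (∑ i, Q i : Set (Pt d))).direction := by
      rw [hdir]; trivial
    have := AffineSubspace.vadd_mem_of_mem_direction hz h0aff
    simpa using this
  have hspan_top : Submodule.span ℝ (∑ i, Q i : Set (Pt d)) = ⊤ := by
    rw [eq_top_iff]
    intro z _
    have hz : z ∈ (affineSpan ℝ (∑ i, Q i : Set (Pt d)) : Set (Pt d)) := by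
      rw [haff_top]; trivial
    have hle : affineSpan ℝ (∑ i, Q i : Set (Pt d)) ≤
        (Submodule.span ℝ (∑ i, Q i : Set (Pt d))).toAffineSubspace :=
      affineSpan_le.2 (fun p hp => Submodule.mem_toAffineSubspace.2 (Submodule.subset_span hp))
    exact Submodule.mem_toAffineSubspace.1 (hle hz)
  -- interior ball of P
  have hball : ∃ ε > (0 : ℝ), ∀ v : Pt d, dist v (0 : Pt d) < ε →
      v ∈ (∑ i, Q i : Set (Pt d)) := by
    have h00 := hPrefl.2.1
    rw [mem_intrinsicInterior] at h00
    obtain ⟨y, hyint, hy0⟩ := h00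
    rw [mem_interior_iff_mem_nhds, nhds_subtype_eq_comap, Filter.mem_comap] at hyint
    obtain ⟨t, ht, hsub⟩ := hyint
    rw [show ((y : Pt d)) = (0 : Pt d) from hy0] at ht
    obtain ⟨ε, hε, hballt⟩ := Metric.mem_nhds_iff.1 ht
    refine ⟨ε, hε, fun v hv => ?_⟩
    have hvaff : v ∈ affineSpan ℝ (∑ i, Q i : Set (Pt d)) := by rw [haff_top]; trivial
    have hmem : (⟨v, hvaff⟩ : affineSpan ℝ (∑ i, Q i : Set (Pt d))) ∈ Subtype.val ⁻¹' t := by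
      show v ∈ t
      apply hballt
      rwa [Metric.mem_ball]
    exact hsub hmem
  refine ⟨?_, ?_, ?_⟩
  -- (a) lattice polytope
  · refine ⟨Vj, ?_, hVconv⟩
    intro v hv
    exact ⟨hVlat v hv, Submodule.subset_span (hVsubS hv)⟩
  -- (b) 0 in the intrinsic interior
  · obtain ⟨ε, hε, hballP⟩ := hball
    have hkey : ∀ v : Pt d, v ∈ UJ Q (I j) → dist v 0 < ε → v ∈ SJ Q (I j) := by
      intro v hvU hvd
      have hvP := hballP v hvd
      have := hLPmem v hvP
      rwa [hLfix v hvU] at this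
    have h0Saff : (0 : Pt d) ∈ affineSpan ℝ (SJ Q (I j)) := mem_affineSpan ℝ (h0S j)
    have haffS : ∀ z, z ∈ affineSpan ℝ (SJ Q (I j)) → z ∈ UJ Q (I j) := by
      intro z hz
      have hle : affineSpan ℝ (SJ Q (I j)) ≤ (UJ Q (I j)).toAffineSubspace :=
        affineSpan_le.2 (fun p hp => Submodule.mem_toAffineSubspace.2 (Submodule.subset_span hp))
      exact Submodule.mem_toAffineSubspace.1 (hle hz)
    rw [mem_intrinsicInterior]
    refine ⟨⟨0, h0Saff⟩, ?_, rfl⟩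
    rw [mem_interior]
    refine ⟨Subtype.val ⁻¹' Metric.ball (0 : Pt d) ε, ?_, ?_, ?_⟩
    · intro z hz
      show (z : Pt d) ∈ SJ Q (I j)
      exact hkey _ (haffS _ z.2) (Metric.mem_ball.1 hz)
    · exact IsOpen.preimage continuous_subtype_val Metric.isOpen_ball
    · show (0 : Pt d) ∈ Metric.ball (0 : Pt d) ε
      rw [Metric.mem_ball, dist_self]
      exact hε
  -- (c) lattice dual polytope
  · obtain ⟨W, hWsub, hWconv⟩ := hPrefl.2.2
    have hWlatt : ∀ w ∈ W, isLatticePt w := by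
      intro w hw
      obtain ⟨hwspan, hwint⟩ := hWsub hw
      intro l
      have hl : sbv l ∈ stdL d ∩ (Submodule.span ℝ (∑ i, Q i : Set (Pt d)) : Set (Pt d)) :=
        ⟨latt_sbv l, by rw [hspan_top]; trivial⟩
      obtain ⟨kk, hkk⟩ := hwint (sbv l) hl
      exact ⟨kk, by rw [← dot_sbv w l]; exact hkk⟩
    have hWP : ∀ w ∈ W, ∀ x ∈ (∑ i, Q i : Set (Pt d)), -1 ≤ dot w x := by
      intro w hw
      have hmem : w ∈ convexHull ℝ (W : Set (Pt d)) := subset_convexHull ℝ _ hw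
      rw [← hWconv] at hmem
      exact hmem.2
    set psi : Pt d →ₗ[ℝ] Pt d := (oprojL (UJ Q (I j))) ∘ₗ (transp (L j)) with hpsi
    have hpsimem : ∀ w, psi w ∈ UJ Q (I j) := fun w => oprojL_mem _ _
    have hpsidot : ∀ w x, x ∈ UJ Q (I j) → dot (psi w) x = dot w (L j x) := by
      intro w x hx
      have h1 : dot (transp (L j) w - oprojL (UJ Q (I j)) (transp (L j) w)) x = 0 :=
        oprojL_dot (UJ Q (I j)) _ hx
      rw [dot_sub_left] at h1
      have h2 : dot (psi w) x = dot (transp (L j) w) x := by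
        show dot (oprojL (UJ Q (I j)) (transp (L j) w)) x = _
        linarith
      rw [h2, dot_transp]
    have hpsidot' : ∀ w x, x ∈ UJ Q (I j) → dot (psi w) x = dot w x := by
      intro w x hx
      rw [hpsidot w x hx, hLfix x hx]
    refine ⟨W.image psi, ?_, ?_⟩
    · -- the image consists of dual lattice points
      intro v hv
      obtain ⟨w, hw, rfl⟩ := Finset.mem_image.1 (Finset.mem_coe.1 hv)
      refine ⟨hpsimem w, ?_⟩
      intro x hx
      obtain ⟨hxlatt, hxspan⟩ := hx
      rw [hpsidot' w x hxspan]
      exact dot_latt (hWlatt w hw) hxlatt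
    · -- the dual polytope is the hull of the image
      apply Set.Subset.antisymm
      · rintro y ⟨hy1, hy2⟩
        have hyhat : ∀ x ∈ (∑ i, Q i : Set (Pt d)), -1 ≤ dot (transp (L j) y) x := by
          intro x hx
          rw [dot_transp]
          exact hy2 (L j x) (hLPmem x hx)
        have hyhatW : transp (L j) y ∈ convexHull ℝ (W : Set (Pt d)) := by
          rw [← hWconv]
          exact ⟨by rw [hspan_top]; trivial, hyhat⟩
        have hyeq : psi (transp (L j) y) = y := by
          have hz : psi (transp (L j) y) - y ∈ UJ Q (I j) :=
            Submodule.sub_mem _ (hpsimem _) hy1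
          have hdotz : dot (psi (transp (L j) y) - y) (psi (transp (L j) y) - y) = 0 := by
            have hgen : ∀ x, x ∈ UJ Q (I j) → dot (psi (transp (L j) y) - y) x = 0 := by
              intro x hx
              rw [dot_sub_left, hpsidot _ x hx, dot_transp, hLfix x hx, hLfix x hx]
              ring
            exact hgen _ hz
          have := dot_zero_self _ hdotz
          exact sub_eq_zero.1 this
        rw [← hyeq]
        have himg : psi '' (convexHull ℝ (W : Set (Pt d))) = convexHull ℝ (psi '' ↑W) :=
          psi.image_convexHull _
        have hmem2 : psi (transp (L j) y) ∈ psi '' (convexHull ℝ (W : Set (Pt d))) :=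
          Set.mem_image_of_mem _ hyhatW
        rw [himg] at hmem2
        rw [Finset.coe_image]
        exact hmem2
      · rw [Finset.coe_image]
        apply convexHull_min
        · rintro _ ⟨w, hw, rfl⟩
          refine ⟨hpsimem w, ?_⟩
          intro x hx
          rw [hpsidot' w x (Submodule.subset_span hx)]
          exact hWP w hw x (hSP j hx)
        · intro y1 hy1 y2 hy2 a b ha hb hab
          constructor
          · exact Submodule.add_mem _ (Submodule.smul_mem _ _ hy1.1)
              (Submodule.smul_mem _ _ hy2.1)
          · intro x hx
            rw [dot_add_left, dot_smul_left, dot_smul_left]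
            have g1 := hy1.2 x hx
            have g2 := hy2.2 x hx
            nlinarith

end Reflexive

/-- Let `P` be a reflexive polytope and `Π(P) = {P_1, …, P_r}` a
nef-partition.  Then `Π(P)` splits as a direct sum over `ℤ` with respect to a partition
`I_1, …, I_k` of the index set if and only if the associated Cayley polytope
`P_1 * ⋯ * P_r` is a ℤ-join of its faces corresponding to the Cayley polytopes of the
sub-nef-partitions `{P_i : i ∈ I_j}`. -/
theorem stmt13 {d r k : ℕ} (hr : 0 < r) (Q : Fin r → Set (Pt d)) (P : Set (Pt d))
    (hnef : IsNefPartition Q P)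
    (I : Fin k → Finset (Fin r)) (hne : ∀ j, (I j).Nonempty)
    (hdisj : ∀ j j', j ≠ j' → Disjoint (I j) (I j'))
    (hcover : Finset.univ.biUnion I = Finset.univ) :
    SplitsOverZ Q I ↔ IsMultiZJoin (cayleyFam Q) (fun j => subCayley Q (I j)) := by
  obtain ⟨m, rfl⟩ : ∃ m, r = m + 1 := ⟨r - 1, (Nat.succ_pred_eq_of_pos hr).symm⟩
  obtain ⟨hQ, hPsum, hPrefl, hPdim⟩ := hnef
  have h0 : ∀ i, (0 : Pt d) ∈ Q i := fun i => (hQ i).2.2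
  have hQlat : ∀ i, IsLat (stdL d) (Q i) := fun i => (hQ i).2.1
  have hQne : ∀ i, (Q i).Nonempty := fun i => (hQ i).1
  subst hPsum
  constructor
  · rintro ⟨hrefl, hsp⟩
    refine ⟨fun j => subCayley_isFace Q (I j) hQne (hne j), cayley_hull Q I hcover, ?_⟩
    intro x hx
    exact forward_decomp Q I h0 hdisj hcover hsp x hx
  · rintro ⟨hfaces, hhull, hmu⟩
    have hsp : ∀ y : Pt d, isLatticePt y → ∃! f : Fin k → Pt d,
        (∀ j, isLatticePt (f j) ∧
          f j ∈ Submodule.span ℝ ((∑ i ∈ I j, Q i : Set (Pt d)))) ∧ y = ∑ j, f j :=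
      fun y hy => backward_decomp Q I h0 hmu y hy
    exact ⟨fun j => backward_reflexive Q I hQlat h0 hdisj hcover hPrefl hPdim hsp j, hsp⟩

end GorST
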